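/- arXiv:cs/0604080 — 2 statements merged into one kernel-verified Lean document; each statement's English description precedes it below -/
import Mathlib

section
/- Every graph G with average degree d ≥ 2 contains an induced forest on at least 2n/(d+1) vertices, where n is the number of vertices of G. -/
open SimpleGraph Finset

section InducedForest

variable {V : Type}

/-- The rank of `x`: the number of elements of `A` whose key under `f` is smaller
than that of `x`. -/
private def rk (A : Finset V) (f : V → ℕ) (x : V) : ℕ :=
  (A.filter fun a => f a < f x).card

private lemma rk_lt_of_lt {A : Finset V} {f : V → ℕ} {u w : V} (hu : u ∈ A)
    (huw : f u < f w) : rk A f u < rk A f w := by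
  apply Finset.card_lt_card
  constructor
  · intro a ha
    simp only [Finset.mem_filter] at *
    exact ⟨ha.1, ha.2.trans huw⟩
  · intro hsub
    have h1 : u ∈ A.filter fun a => f a < f w := by
      simp [hu, huw]
    have := hsub h1
    simp only [Finset.mem_filter] at this
    omega

private lemma rk_injOn {A : Finset V} {f : V → ℕ} (hf : Function.Injective f)
    {u w : V} (hu : u ∈ A) (hw : w ∈ A) (h : rk A f u = rk A f w) : u = w := by
  rcases lt_trichotomy (f u) (f w) with h1 | h1 | h1
  · exact absurd h (Nat.ne_of_lt (rk_lt_of_lt hu h1))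
  · exact hf h1
  · exact absurd h.symm (Nat.ne_of_lt (rk_lt_of_lt hw h1))

private lemma rk_lt_card {A : Finset V} {f : V → ℕ} {x : V} (hx : x ∈ A) :
    rk A f x < A.card :=
  Finset.card_lt_card (Finset.filter_ssubset.mpr ⟨x, hx, lt_irrefl _⟩)

private lemma rk_surj {A : Finset V} {f : V → ℕ} (hf : Function.Injective f)
    {j : ℕ} (hj : j < A.card) : ∃ u ∈ A, rk A f u = j := by
  have hinj : Set.InjOn (rk A f) A := fun u hu w hw h => rk_injOn hf hu hw h
  have hcard : (A.image (rk A f)).card = A.card := Finset.card_image_of_injOn hinj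
  have hsub : A.image (rk A f) ⊆ Finset.range A.card := by
    intro b hb
    obtain ⟨u, hu, rfl⟩ := Finset.mem_image.mp hb
    exact Finset.mem_range.mpr (rk_lt_card hu)
  have : A.image (rk A f) = Finset.range A.card :=
    Finset.eq_of_subset_of_card_le hsub (by simp [hcard])
  have : j ∈ A.image (rk A f) := this ▸ Finset.mem_range.mpr hj
  obtain ⟨u, hu, h⟩ := Finset.mem_image.mp this
  exact ⟨u, hu, h⟩

private lemma rk_comp_swap [DecidableEq V] {A : Finset V} {f : V → ℕ} {v u : V}
    (hv : v ∈ A) (hu : u ∈ A) (x : V) :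
    rk A (fun a => f (Equiv.swap v u a)) x = rk A f (Equiv.swap v u x) := by
  unfold rk
  apply Finset.card_nbij' (i := fun a => Equiv.swap v u a) (j := fun a => Equiv.swap v u a)
  · intro a ha
    simp only [Finset.mem_coe, Finset.mem_filter] at *
    constructor
    · rw [Equiv.swap_apply_def]; split_ifs <;> tauto
    · exact ha.2
  · intro a ha
    simp only [Finset.mem_coe, Finset.mem_filter] at *
    refine ⟨?_, ?_⟩
    · rw [Equiv.swap_apply_def]; split_ifs <;> tauto
    · simpa using ha.2
  · intro a _; simp
  · intro a _; simp

/-- For a fixed `j < |A|` and `v ∈ A`, the number of permutations of `V` in which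
`v` gets rank `j` within `A` is `|Perm V| / |A|`. -/
private lemma count_rank_eq [Fintype V] [DecidableEq V] (e : V → ℕ)
    (he : Function.Injective e) (A : Finset V) {v : V} (hv : v ∈ A) {j : ℕ}
    (hj : j < A.card) :
    ((Finset.univ : Finset (Equiv.Perm V)).filter
        fun σ => rk A (fun x => e (σ x)) v = j).card * A.card
      = Fintype.card (Equiv.Perm V) := by
  classical
  have hinj : ∀ σ : Equiv.Perm V, Function.Injective fun x => e (σ x) :=
    fun σ => he.comp σ.injective
  have hex : ∀ σ : Equiv.Perm V, ∃ u ∈ A, rk A (fun x => e (σ x)) u = j :=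
    fun σ => rk_surj (hinj σ) hj
  set w : Equiv.Perm V → V := fun σ => (hex σ).choose with hw
  have hwmem : ∀ σ, w σ ∈ A := fun σ => (hex σ).choose_spec.1
  have hwrk : ∀ σ, rk A (fun x => e (σ x)) (w σ) = j := fun σ => (hex σ).choose_spec.2
  have key : ∀ (σ : Equiv.Perm V) (u : V), u ∈ A → ∀ x,
      rk A (fun x => e ((σ * Equiv.swap v u) x)) x
        = rk A (fun x => e (σ x)) (Equiv.swap v u x) :=
    fun σ u hu x => rk_comp_swap (f := fun x => e (σ x)) hv hu x
  rw [Fintype.card, ← Finset.card_product]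
  apply Finset.card_nbij' (i := fun p => p.1 * Equiv.swap v p.2)
    (j := fun σ => (σ * Equiv.swap v (w σ), w σ))
  · intro p hp
    exact Finset.mem_univ _
  · intro σ _
    simp only [Finset.mem_coe, Finset.mem_product, Finset.mem_filter, Finset.mem_univ, true_and]
    constructor
    · rw [key σ (w σ) (hwmem σ) v, Equiv.swap_apply_left]
      exact hwrk σ
    · exact hwmem σ
  · rintro ⟨σ', u⟩ hp
    simp only [Finset.mem_coe, Finset.mem_product, Finset.mem_filter, Finset.mem_univ, true_and] at hp
    obtain ⟨hσ', hu⟩ := hp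
    have h1 : w (σ' * Equiv.swap v u) = u := by
      apply rk_injOn (hinj (σ' * Equiv.swap v u)) (hwmem _) hu
      rw [hwrk, key σ' u hu u, Equiv.swap_apply_right, hσ']
    simp only [h1]
    ext x
    · simp [mul_assoc]
    · rfl
  · intro σ _
    simp [mul_assoc]

/-- If every vertex on a cycle has at most one neighbour with smaller key, we get a
contradiction: the "larger endpoint" map is an injection from the edges of the cycle
into the non-minimal vertices of the cycle. -/
private lemma no_cycle_count [Fintype V] (G : SimpleGraph V) [DecidableRel G.Adj]
    (r : V → ℕ) (hr : Function.Injective r) {b : V} (p : G.Walk b b) (hp : p.IsCycle)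
    (hlow : ∀ x ∈ p.support, rk (G.neighborFinset x) r x ≤ 1) : False := by
  classical
  set F : Finset (Sym2 V) := p.edges.toFinset with hF
  set T : Finset V := p.support.toFinset with hT
  have hFcard : F.card = p.length := by
    rw [hF, List.toFinset_card_of_nodup hp.edges_nodup, SimpleGraph.Walk.length_edges]
  have hTle : T.card ≤ p.length := by
    cases p with
    | nil => simp at hp
    | cons h q =>
      have hb : b ∈ q.support := SimpleGraph.Walk.end_mem_support q
      have : T ⊆ q.support.toFinset := by
        intro x hx
        rw [hT] at hx
        simp only [SimpleGraph.Walk.support_cons, List.toFinset_cons, Finset.mem_insert,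
          List.mem_toFinset] at hx ⊢
        rcases hx with rfl | hx
        · exact hb
        · exact hx
      calc T.card ≤ q.support.toFinset.card := Finset.card_le_card this
        _ ≤ q.support.length := q.support.toFinset_card_le
        _ = q.length + 1 := by rw [SimpleGraph.Walk.length_support]
        _ = (SimpleGraph.Walk.cons h q).length := by simp
  set mx : Sym2 V → V := Sym2.lift ⟨fun x y => if r x < r y then y else x, by
    intro x y
    dsimp only
    rcases lt_trichotomy (r x) (r y) with h | h | h
    · rw [if_pos h, if_neg (by omega)]
    · have := hr h
      subst this
      simp
    · rw [if_neg (by omega), if_pos h]⟩ with hmx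
  have hmx_pair : ∀ x y : V, mx s(x, y) = if r x < r y then y else x := fun x y => rfl
  have key : ∀ e ∈ F, ∃ u, u ∈ T ∧ mx e ∈ T ∧ e = s(u, mx e) ∧ G.Adj u (mx e) ∧
      r u < r (mx e) := by
    intro e he
    rw [hF, List.mem_toFinset] at he
    induction e using Sym2.inductionOn with
    | hf x y =>
      have hadj : G.Adj x y := p.adj_of_mem_edges he
      have hxT : x ∈ T := by
        rw [hT, List.mem_toFinset]
        exact SimpleGraph.Walk.fst_mem_support_of_mem_edges p he
      have hyT : y ∈ T := by
        rw [hT, List.mem_toFinset]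
        exact SimpleGraph.Walk.snd_mem_support_of_mem_edges p he
      have hxy : x ≠ y := hadj.ne
      rcases lt_trichotomy (r x) (r y) with h | h | h
      · have hmxv : mx s(x, y) = y := by rw [hmx_pair, if_pos h]
        exact ⟨x, hxT, by rw [hmxv]; exact hyT, by rw [hmxv], by rw [hmxv]; exact hadj,
          by rw [hmxv]; exact h⟩
      · exact absurd (hr h) hxy
      · have hmxv : mx s(x, y) = x := by rw [hmx_pair, if_neg (by omega)]
        exact ⟨y, hyT, by rw [hmxv]; exact hxT, by rw [hmxv, Sym2.eq_swap],
          by rw [hmxv]; exact hadj.symm, by rw [hmxv]; exact h⟩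
  obtain ⟨m, hmT, hmmin⟩ := T.exists_min_image r ⟨b, by
    rw [hT, List.mem_toFinset]; exact SimpleGraph.Walk.start_mem_support p⟩
  have hmaps : ∀ e ∈ F, mx e ∈ T.erase m := by
    intro e he
    obtain ⟨u, huT, hmxT, -, -, hru⟩ := key e he
    refine Finset.mem_erase.mpr ⟨?_, hmxT⟩
    rintro rfl
    exact absurd (hmmin u huT) (by omega)
  have hinj : Set.InjOn mx F := by
    intro e1 he1 e2 he2 hmxe
    rw [Finset.mem_coe] at he1 he2
    obtain ⟨u1, -, hvT, he1e, hadj1, hru1⟩ := key e1 he1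
    obtain ⟨u2, -, -, he2e, hadj2, hru2⟩ := key e2 he2
    rw [← hmxe] at he2e hadj2 hru2
    have hS := hlow (mx e1) (by rw [hT, List.mem_toFinset] at hvT; exact hvT)
    have h1 : u1 ∈ (G.neighborFinset (mx e1)).filter fun a => r a < r (mx e1) := by
      simp [SimpleGraph.mem_neighborFinset, hadj1.symm, hru1]
    have h2 : u2 ∈ (G.neighborFinset (mx e1)).filter fun a => r a < r (mx e1) := by
      simp [SimpleGraph.mem_neighborFinset, hadj2.symm, hru2]
    have : u1 = u2 := Finset.card_le_one.mp hS _ h1 _ h2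
    rw [he1e, he2e, this]
  have hcard : F.card ≤ (T.erase m).card := Finset.card_le_card_of_injOn mx hmaps hinj
  have h3 : 3 ≤ p.length := hp.three_le_length
  rw [hFcard, Finset.card_erase_of_mem hmT] at hcard
  omega

/-- If every vertex of `S` has at most one neighbour (in `G`) with smaller key, then
`S` induces a forest. -/
private lemma forest_of_rank [Fintype V] (G : SimpleGraph V) [DecidableRel G.Adj]
    (r : V → ℕ) (hr : Function.Injective r) (S : Finset V)
    (hS : ∀ x ∈ S, rk (G.neighborFinset x) r x ≤ 1) :
    (G.induce (S : Set V)).IsAcyclic := by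
  intro v c hc
  let φ : G.induce (S : Set V) ↪g G := SimpleGraph.Embedding.induce (G := G) (S : Set V)
  have hc' : (c.map φ.toHom).IsCycle := hc.map φ.injective
  apply no_cycle_count G r hr _ hc'
  intro x hx
  rw [SimpleGraph.Walk.support_map, List.mem_map] at hx
  obtain ⟨a, _, rfl⟩ := hx
  exact hS _ a.2

end InducedForest

/-- Every graph `G` on `n` vertices with average degree `d = 2m/n ≥ 2` contains an
induced forest on at least `2n/(d+1)` vertices. -/
theorem stmt_7 {V : Type} [Fintype V] [Nonempty V] (G : SimpleGraph V)
    [DecidableRel G.Adj] (d : ℝ)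
    (hd : d = 2 * G.edgeFinset.card / (Fintype.card V))
    (hd2 : 2 ≤ d) :
    ∃ S : Finset V, (G.induce (S : Set V)).IsAcyclic ∧
      2 * (Fintype.card V : ℝ) / (d + 1) ≤ S.card := by
  classical
  set n := Fintype.card V with hn
  set N := Fintype.card (Equiv.Perm V) with hN
  set m := G.edgeFinset.card with hm
  have hn0 : 0 < n := Fintype.card_pos
  have hnR : (0 : ℝ) < n := by exact_mod_cast hn0
  have hN0 : 0 < N := Fintype.card_pos
  have hNR : (0 : ℝ) < N := by exact_mod_cast hN0
  have hdm : (2 : ℝ) * m = d * n := by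
    rw [hd]
    field_simp
  set e : V → ℕ := fun x => (Fintype.equivFin V x : ℕ) with he'
  have he : Function.Injective e := by
    intro a b h
    exact (Fintype.equivFin V).injective (Fin.val_injective h)
  set S : Equiv.Perm V → Finset V := fun σ =>
    Finset.univ.filter fun x => rk (G.neighborFinset x) (fun y => e (σ y)) x ≤ 1 with hS'
  have hforest : ∀ σ, (G.induce ((S σ : Finset V) : Set V)).IsAcyclic := by
    intro σ
    apply forest_of_rank G _ (he.comp σ.injective)
    intro x hx
    exact (Finset.mem_filter.mp hx).2
  set cnt : V → ℕ := fun v => ((Finset.univ : Finset (Equiv.Perm V)).filter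
      fun σ => rk (G.neighborFinset v) (fun y => e (σ y)) v ≤ 1).card with hcnt'
  have hdouble : ∑ σ : Equiv.Perm V, (S σ).card = ∑ v : V, cnt v := by
    simp only [hS', hcnt', Finset.card_filter]
    exact Finset.sum_comm
  -- counting bounds for each vertex
  have hcnt0 : ∀ v, G.degree v = 0 → cnt v = N := by
    intro v hv
    have hnb : G.neighborFinset v = ∅ := by
      rw [← Finset.card_eq_zero, SimpleGraph.card_neighborFinset_eq_degree, hv]
    rw [hcnt']
    simp only [hnb]
    rw [Finset.filter_true_of_mem, Finset.card_univ]
    intro σ _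
    simp [rk]
  have hcnt1 : ∀ v, 1 ≤ G.degree v → 2 * N ≤ cnt v * (G.degree v + 1) := by
    intro v hv
    set A : Finset V := insert v (G.neighborFinset v) with hA
    have hvnb : v ∉ G.neighborFinset v := by
      simp [SimpleGraph.mem_neighborFinset]
    have hvA : v ∈ A := Finset.mem_insert_self _ _
    have hAcard : A.card = G.degree v + 1 := by
      rw [hA, Finset.card_insert_of_notMem hvnb, SimpleGraph.card_neighborFinset_eq_degree]
    have hrkA : ∀ f : V → ℕ, rk A f v = rk (G.neighborFinset v) f v := by
      intro f
      rw [hA, rk, Finset.filter_insert, if_neg (lt_irrefl (f v))]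
      rfl
    have hc0 : ((Finset.univ : Finset (Equiv.Perm V)).filter
        fun σ => rk A (fun x => e (σ x)) v = 0).card * A.card = N :=
      count_rank_eq e he A hvA (by omega)
    have hc1 : ((Finset.univ : Finset (Equiv.Perm V)).filter
        fun σ => rk A (fun x => e (σ x)) v = 1).card * A.card = N :=
      count_rank_eq e he A hvA (by omega)
    have hsub : ((Finset.univ : Finset (Equiv.Perm V)).filter
          fun σ => rk A (fun x => e (σ x)) v = 0)
        ∪ ((Finset.univ : Finset (Equiv.Perm V)).filter
          fun σ => rk A (fun x => e (σ x)) v = 1)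
        ⊆ (Finset.univ : Finset (Equiv.Perm V)).filter
          fun σ => rk (G.neighborFinset v) (fun y => e (σ y)) v ≤ 1 := by
      intro σ hσ
      simp only [Finset.mem_union, Finset.mem_filter, Finset.mem_univ, true_and] at hσ ⊢
      rw [← hrkA]
      omega
    have hdisj : Disjoint ((Finset.univ : Finset (Equiv.Perm V)).filter
          fun σ => rk A (fun x => e (σ x)) v = 0)
        ((Finset.univ : Finset (Equiv.Perm V)).filter
          fun σ => rk A (fun x => e (σ x)) v = 1) := by
      rw [Finset.disjoint_filter]
      intro σ _ h0 h1
      omega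
    have hge : ((Finset.univ : Finset (Equiv.Perm V)).filter
          fun σ => rk A (fun x => e (σ x)) v = 0).card
        + ((Finset.univ : Finset (Equiv.Perm V)).filter
          fun σ => rk A (fun x => e (σ x)) v = 1).card ≤ cnt v := by
      rw [← Finset.card_union_of_disjoint hdisj]
      exact Finset.card_le_card hsub
    calc 2 * N = ((Finset.univ : Finset (Equiv.Perm V)).filter
          fun σ => rk A (fun x => e (σ x)) v = 0).card * A.card
        + ((Finset.univ : Finset (Equiv.Perm V)).filter
          fun σ => rk A (fun x => e (σ x)) v = 1).card * A.card := by rw [hc0, hc1]; ring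
      _ ≤ cnt v * A.card := by
          rw [← add_mul]
          exact Nat.mul_le_mul_right _ hge
      _ = cnt v * (G.degree v + 1) := by rw [hAcard]
  -- degree sum
  have hdegsum : ∑ v : V, (G.degree v : ℝ) = 2 * m := by
    have := SimpleGraph.sum_degrees_eq_twice_card_edges G
    exact_mod_cast this
  -- the main real estimate
  have hsum : 2 * (n : ℝ) / (d + 1) * N ≤ ∑ v : V, (cnt v : ℝ) := by
    rcases le_or_gt d 3 with hd3 | hd3
    · -- case 2 ≤ d ≤ 3 : use the line 1 - t/6
      have hper : ∀ v : V, (N : ℝ) * (1 - (G.degree v : ℝ) / 6) ≤ cnt v := by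
        intro v
        rcases Nat.eq_zero_or_pos (G.degree v) with h0 | h1
        · rw [hcnt0 v h0, h0]
          norm_num
        · have h2 : (2 : ℝ) * N ≤ cnt v * ((G.degree v : ℝ) + 1) := by
            exact_mod_cast hcnt1 v h1
          have hk1 : (1 : ℝ) ≤ (G.degree v : ℝ) := by exact_mod_cast h1
          have hfac : (0 : ℝ) ≤ ((G.degree v : ℝ) - 2) * ((G.degree v : ℝ) - 3) := by
            rcases le_or_gt (G.degree v) 2 with hc | hc
            · have hc' : (G.degree v : ℝ) ≤ 2 := by exact_mod_cast hc
              nlinarith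
            · have hc' : (3 : ℝ) ≤ (G.degree v : ℝ) := by exact_mod_cast hc
              nlinarith
          set k : ℝ := (G.degree v : ℝ) with hk
          nlinarith [hNR.le]
      calc 2 * (n : ℝ) / (d + 1) * N ≤ (N : ℝ) * (n - d * n / 6) := by
            have h1 : (0 : ℝ) < d + 1 := by linarith
            rw [div_mul_eq_mul_div, div_le_iff₀ h1]
            have hfac2 : (0 : ℝ) ≤ (d - 2) * (3 - d) := by nlinarith
            nlinarith [mul_nonneg (mul_nonneg hnR.le hNR.le) hfac2]
        _ = ∑ v : V, (N : ℝ) * (1 - (G.degree v : ℝ) / 6) := by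
            have hsumA : ∑ v : V, (1 - (G.degree v : ℝ) / 6) = (n : ℝ) - d * (n : ℝ) / 6 := by
              rw [Finset.sum_sub_distrib, Finset.sum_const, Finset.card_univ, nsmul_eq_mul,
                mul_one, ← Finset.sum_div, hdegsum]
              linear_combination (-1/6 : ℝ) * hdm
            rw [← Finset.mul_sum, hsumA]
        _ ≤ ∑ v : V, (cnt v : ℝ) := Finset.sum_le_sum fun v _ => hper v
    · -- case d ≥ 3 : use the tangent line at d
      have hper : ∀ v : V,
          (N : ℝ) * ((4 * d + 2 - 2 * (G.degree v : ℝ)) / ((d + 1) ^ 2)) ≤ cnt v := by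
        intro v
        have hdpos : (0 : ℝ) < (d + 1) ^ 2 := by positivity
        rcases Nat.eq_zero_or_pos (G.degree v) with h0 | h1
        · rw [hcnt0 v h0, h0]
          push_cast
          rw [mul_div_assoc', div_le_iff₀ hdpos]
          have : (0 : ℝ) ≤ d * d - 2 * d - 1 := by nlinarith
          nlinarith [mul_nonneg hNR.le this]
        · have h2 : (2 : ℝ) * N ≤ cnt v * ((G.degree v : ℝ) + 1) := by
            exact_mod_cast hcnt1 v h1
          have hk1 : (1 : ℝ) ≤ (G.degree v : ℝ) := by exact_mod_cast h1
          set k : ℝ := (G.degree v : ℝ) with hk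
          have hfac : (0 : ℝ) ≤ (N : ℝ) * (d - k) ^ 2 :=
            mul_nonneg hNR.le (sq_nonneg _)
          have h3 : (2 * N : ℝ) * (d + 1) ^ 2 ≤ cnt v * (k + 1) * (d + 1) ^ 2 :=
            mul_le_mul_of_nonneg_right h2 hdpos.le
          have hkpos : (0 : ℝ) < k + 1 := by linarith
          rw [mul_div_assoc', div_le_iff₀ hdpos]
          nlinarith [h3, hfac, hkpos]
      have hsum3 : ∑ v : V, (4 * d + 2 - 2 * (G.degree v : ℝ)) = (n : ℝ) * (2 * d + 2) := by
        rw [Finset.sum_sub_distrib, Finset.sum_const, Finset.card_univ, nsmul_eq_mul,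
          ← Finset.mul_sum, hdegsum]
        linear_combination (-2 : ℝ) * hdm
      have hne : (d + 1) ≠ 0 := by positivity
      calc 2 * (n : ℝ) / (d + 1) * N = ∑ v : V,
            (N : ℝ) * ((4 * d + 2 - 2 * (G.degree v : ℝ)) / ((d + 1) ^ 2)) := by
            rw [← Finset.mul_sum, ← Finset.sum_div, hsum3]
            field_simp
        _ ≤ ∑ v : V, (cnt v : ℝ) := Finset.sum_le_sum fun v _ => hper v
  -- extract a good permutation
  have hsum2 : 2 * (n : ℝ) / (d + 1) * N ≤ ∑ σ : Equiv.Perm V, ((S σ).card : ℝ) := by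
    calc 2 * (n : ℝ) / (d + 1) * N ≤ ∑ v : V, (cnt v : ℝ) := hsum
      _ = ∑ σ : Equiv.Perm V, ((S σ).card : ℝ) := by
          rw [← Nat.cast_sum, ← Nat.cast_sum, hdouble]
  by_contra hcon
  push_neg at hcon
  have hlt : ∀ T : Finset V, (G.induce (T : Set V)).IsAcyclic →
      (T.card : ℝ) < 2 * (n : ℝ) / (d + 1) := fun T hT => hcon T hT
  have : ∑ σ : Equiv.Perm V, ((S σ).card : ℝ) < ∑ σ : Equiv.Perm V, 2 * (n : ℝ) / (d + 1) := by
    apply Finset.sum_lt_sum_of_nonempty Finset.univ_nonempty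
    intro σ _
    exact hlt (S σ) (hforest σ)
  rw [Finset.sum_const, Finset.card_univ, nsmul_eq_mul] at this
  nlinarith [hsum2]
end

section
/- Let f : ℕ → ℝ be nondecreasing and satisfy f(n) ≤ n + f(n−1) + f(n−6) for all n ≥ 20, with f(n) ≤ n·2^{3n/8} for all n < 20. Then f(n) ≤ n·2^{3n/8} for all n. -/
lemma key_ineq (a : ℝ) (ha : (1.29:ℝ) ≤ a) (k : ℕ) (hk : 14 ≤ k) :
    ((k:ℝ)+6) + ((k:ℝ)+5) * a^(k+5) + (k:ℝ) * a^k ≤ ((k:ℝ)+6) * a^(k+6) := by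
  have ha0 : (0:ℝ) ≤ a := by linarith
  have h14 : (1.29:ℝ)^14 ≤ a^14 := pow_le_pow_left₀ (by norm_num) ha 14
  have hk14 : a^14 ≤ a^k := pow_le_pow_right₀ (by linarith) hk
  have hX : (35:ℝ) ≤ a^k := by nlinarith [h14, hk14]
  have h5 : (1.29:ℝ)^5 ≤ a^5 := pow_le_pow_left₀ (by norm_num) ha 5
  have hY : (3.57:ℝ) ≤ a^5 := by nlinarith
  have hkr : (14:ℝ) ≤ (k:ℝ) := by exact_mod_cast hk
  have e5 : a^(k+5) = a^k * a^5 := pow_add a k 5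
  have e6 : a^(k+6) = a^k * (a^5 * a) := by rw [pow_add, pow_succ]
  rw [e5, e6]
  set X := a^k with hXdef
  set Y := a^5 with hYdef
  have hYa : (1.035:ℝ) ≤ Y * (a - 1) := by nlinarith
  have hB1 : (0.035:ℝ) ≤ Y * a - Y - 1 := by nlinarith
  have hB2 : (9.7:ℝ) ≤ 6 * (Y * a) - 5 * Y := by nlinarith
  have hB : (0.035:ℝ) * (k:ℝ) + 9.7 ≤ (k:ℝ) * (Y * a - Y - 1) + (6 * (Y * a) - 5 * Y) := by
    nlinarith
  have hXB : (35:ℝ) * ((0.035:ℝ) * (k:ℝ) + 9.7) ≤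
      X * ((k:ℝ) * (Y * a - Y - 1) + (6 * (Y * a) - 5 * Y)) := by
    have h0 : (0:ℝ) ≤ (0.035:ℝ) * (k:ℝ) + 9.7 := by nlinarith
    exact mul_le_mul hX hB h0 (by nlinarith)
  nlinarith [hXB]

/-- If `f : ℕ → ℝ` is nondecreasing, satisfies `f(n) ≤ n + f(n−1) + f(n−6)` for all
`n ≥ 20`, and `f(n) ≤ n · 2^{3n/8}` for all `n < 20`, then `f(n) ≤ n · 2^{3n/8}`
for all `n`. -/
theorem stmt_13 (f : ℕ → ℝ) (hmono : Monotone f)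
    (hrec : ∀ n : ℕ, 20 ≤ n → f n ≤ n + f (n - 1) + f (n - 6))
    (hbase : ∀ n : ℕ, n < 20 → f n ≤ n * (2 : ℝ) ^ (3 * (n : ℝ) / 8)) :
    ∀ n : ℕ, f n ≤ n * (2 : ℝ) ^ (3 * (n : ℝ) / 8) := by
  set a : ℝ := (2:ℝ) ^ ((3:ℝ)/8) with hadef
  have hbridge : ∀ m : ℕ, (2:ℝ) ^ (3 * (m:ℝ) / 8) = a ^ m := by
    intro m
    rw [hadef, ← Real.rpow_natCast ((2:ℝ) ^ ((3:ℝ)/8)) m, ← Real.rpow_mul (by norm_num)]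
    congr 1; ring
  have ha8 : a ^ 8 = 8 := by
    rw [hadef, ← Real.rpow_natCast ((2:ℝ) ^ ((3:ℝ)/8)) 8, ← Real.rpow_mul (by norm_num)]
    norm_num
  have ha : (1.29:ℝ) ≤ a := by
    apply le_of_pow_le_pow_left₀ (n := 8) (by norm_num) (by positivity)
    rw [ha8]; norm_num
  intro n
  induction n using Nat.strong_induction_on with
  | _ n ih =>
    by_cases h : n < 20
    · exact hbase n h
    · push_neg at h
      obtain ⟨k, rfl⟩ : ∃ k, n = k + 6 := ⟨n - 6, by omega⟩
      have hk : 14 ≤ k := by omega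
      have h1 := ih (k + 5) (by omega)
      have h6 := ih k (by omega)
      have hr := hrec (k + 6) (by omega)
      have e1 : k + 6 - 1 = k + 5 := by omega
      have e2 : k + 6 - 6 = k := by omega
      rw [e1, e2] at hr
      rw [hbridge] at h1 h6 ⊢
      have key := key_ineq a ha k hk
      push_cast at h1 h6 hr ⊢
      linarith
end
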